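/- For every constant-free nested regular expression e built from the axes self, next, edge, node and their inverses using composition, union, Kleene star and nesting, if (a,b) ∈ ⟦e⟧_G for some p-RDF graph G with a,b constants of G, then there exists a strongly acyclic p-RDF graph H such that (a,b) ∈ ⟦e⟧_H. -/

import Mathlib

/-- Navigation axes for nested regular expressions. -/
inductive Axis where
  | self | next | edge | node | nextInv | edgeInv | nodeInv
deriving DecidableEq

/-- Nested regular expressions over a universe `U` of constants. -/
inductive NRE (U : Type) where
  | axis : Axis → NRE U
  | axisC : Axis → U → NRE U
  | nest : Axis → NRE U → NRE U
  | comp : NRE U → NRE U → NRE U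
  | union : NRE U → NRE U → NRE U
  | star : NRE U → NRE U

variable {U : Type}

/-- Active domain of an RDF graph. -/
def adom (G : Set (U × U × U)) : Set U :=
  {c | ∃ t ∈ G, c = t.1 ∨ c = t.2.1 ∨ c = t.2.2}

/-- Relational composition. -/
def rcomp (R S : Set (U × U)) : Set (U × U) :=
  {p | ∃ c, (p.1, c) ∈ R ∧ (c, p.2) ∈ S}

/-- Evaluation of a bare axis on an RDF graph. -/
def axisFwd (G : Set (U × U × U)) : Axis → Set (U × U)
  | .self => {p | p.1 = p.2 ∧ p.1 ∈ adom G}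
  | .next => {p | ∃ c, (p.1, c, p.2) ∈ G}
  | .edge => {p | ∃ c, (p.1, p.2, c) ∈ G}
  | .node => {p | ∃ c, (c, p.1, p.2) ∈ G}
  | .nextInv => {p | ∃ c, (p.2, c, p.1) ∈ G}
  | .edgeInv => {p | ∃ c, (p.2, p.1, c) ∈ G}
  | .nodeInv => {p | ∃ c, (c, p.2, p.1) ∈ G}

/-- Evaluation of `axis::c` on an RDF graph. -/
def axisCEval (G : Set (U × U × U)) : Axis → U → Set (U × U)
  | .self, c => {p | p.1 = p.2 ∧ p.1 = c ∧ c ∈ adom G}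
  | .next, c => {p | (p.1, c, p.2) ∈ G}
  | .edge, c => {p | (p.1, p.2, c) ∈ G}
  | .node, c => {p | (c, p.1, p.2) ∈ G}
  | .nextInv, c => {p | (p.2, c, p.1) ∈ G}
  | .edgeInv, c => {p | (p.2, p.1, c) ∈ G}
  | .nodeInv, c => {p | (c, p.2, p.1) ∈ G}

/-- Evaluation of a nested regular expression on an RDF graph. -/
def NRE.eval (G : Set (U × U × U)) : NRE U → Set (U × U)
  | .axis a => axisFwd G a
  | .axisC a c => axisCEval G a c
  | .nest .self e => {p | p.1 = p.2 ∧ ∃ c, (p.1, c) ∈ e.eval G}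
  | .nest a e => {p | ∃ c d, p ∈ axisCEval G a c ∧ (c, d) ∈ e.eval G}
  | .comp e1 e2 => rcomp (e1.eval G) (e2.eval G)
  | .union e1 e2 => e1.eval G ∪ e2.eval G
  | .star e => {p | p.1 = p.2 ∧ p.1 ∈ adom G} ∪
      {p | Relation.TransGen (fun a b => (a, b) ∈ e.eval G) p.1 p.2}
/-- A p-RDF graph: all predicates equal p, and p occurs neither as subject nor object. -/
def IsPGraph (p : U) (G : Set (U × U × U)) : Prop :=
  (∀ t ∈ G, t.2.1 = p) ∧ ∀ t ∈ G, t.1 ≠ p ∧ t.2.2 ≠ p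

/-- The induced graph of a p-RDF graph: an undirected bipartite graph with a node
(inl a) for each constant a, a node (inr (a,b)) for each triple (a,p,b), and
edges {v_a, u_ab}, {u_ab, v_b}. -/
def indGraph (p : U) (G : Set (U × U × U)) : SimpleGraph (U ⊕ (U × U)) where
  Adj v w := ∃ a q, ((v = Sum.inl a ∧ w = Sum.inr q) ∨ (v = Sum.inr q ∧ w = Sum.inl a)) ∧
      (q.1, p, q.2) ∈ G ∧ (a = q.1 ∨ a = q.2)
  symm := by
    constructor
    rintro v w ⟨a, q, h1, h2, h3⟩
    exact ⟨a, q, h1.symm.imp And.symm And.symm, h2, h3⟩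
  loopless := by
    constructor
    rintro v ⟨a, q, (⟨h, h'⟩ | ⟨h, h'⟩), -, -⟩ <;> subst h <;> simp at h'

/-- A p-RDF graph is strongly acyclic if its induced graph is acyclic. -/
def StronglyAcyclic (p : U) (G : Set (U × U × U)) : Prop :=
  (indGraph p G).IsAcyclic

/-- Constant-free nested regular expressions (no subexpression of the form axis::c). -/
def NRE.constFree : NRE U → Prop
  | .axis _ => True
  | .axisC _ _ => False
  | .nest _ e => e.constFree
  | .comp e1 e2 => e1.constFree ∧ e2.constFree
  | .union e1 e2 => e1.constFree ∧ e2.constFree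
  | .star e => e.constFree

/-! ### Auxiliary lemmas -/

section Aux

open SimpleGraph

lemma aux_cycle_false {V : Type*} {G : SimpleGraph V} (f : V → V) (m : V → ℕ)
    (hpar : ∀ v w, G.Adj v w → (w = f v ∧ m w < m v) ∨ (v = f w ∧ m v < m w))
    (x : V) (c : G.Walk x x) (hc : c.IsCycle)
    (hmax : ∀ y ∈ c.support, m y ≤ m x) : False := by
  cases c with
  | nil => exact Walk.IsCycle.not_of_nil hc
  | @cons _ y _ hadj q =>
    have hy : y ∈ (Walk.cons hadj q).support := by
      rw [Walk.support_cons]; exact List.mem_cons_of_mem _ q.start_mem_support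
    have hyf : y = f x := by
      rcases hpar x y hadj with ⟨h1, _⟩ | ⟨_, h2⟩
      · exact h1
      · exact absurd (hmax y hy) (not_le.mpr h2)
    cases hq : q.reverse with
    | nil =>
      have : q = Walk.nil := by
        have := congrArg Walk.reverse hq
        simpa using this
      subst this
      exact hadj.ne (by cases hq; rfl)
    | @cons _ z _ hadj2 r =>
      have hzq : z ∈ q.support := by
        have : z ∈ q.reverse.support := by
          rw [hq, Walk.support_cons]
          exact List.mem_cons_of_mem _ r.start_mem_support
        rwa [Walk.support_reverse, List.mem_reverse] at this
      have hz : z ∈ (Walk.cons hadj q).support := by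
        rw [Walk.support_cons]; exact List.mem_cons_of_mem _ hzq
      have hzf : z = f x := by
        rcases hpar x z hadj2 with ⟨h1, _⟩ | ⟨_, h2⟩
        · exact h1
        · exact absurd (hmax z hz) (not_le.mpr h2)
      have hyz : y = z := hyf.trans hzf.symm
      have htrail : (Walk.cons hadj q).IsTrail := hc.isCircuit.isTrail
      have hnodup := htrail.edges_nodup
      rw [Walk.edges_cons] at hnodup
      have hnotmem := (List.nodup_cons.mp hnodup).1
      have hmem : s(x, z) ∈ q.edges := by
        have : s(x, z) ∈ q.reverse.edges := by
          rw [hq, Walk.edges_cons]; exact List.mem_cons_self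
        rwa [Walk.edges_reverse, List.mem_reverse] at this
      rw [← hyz] at hmem
      exact hnotmem hmem

lemma acyclic_of_parent {V : Type*} (G : SimpleGraph V) (f : V → V) (m : V → ℕ)
    (hpar : ∀ v w, G.Adj v w → (w = f v ∧ m w < m v) ∨ (v = f w ∧ m v < m w)) :
    G.IsAcyclic := by
  classical
  intro v c hc
  obtain ⟨x, hxmem, hxmax⟩ := Finset.exists_max_image c.support.toFinset m
    ⟨v, by simp [Walk.start_mem_support]⟩
  rw [List.mem_toFinset] at hxmem
  refine aux_cycle_false f m hpar x (c.rotate x hxmem) (hc.rotate hxmem) ?_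
  intro y hy
  rw [Walk.support_eq_cons] at hy
  rcases List.mem_cons.mp hy with rfl | hy'
  · exact le_refl _
  · have : y ∈ c.support.tail := (Walk.support_rotate c x hxmem).mem_iff.mp hy'
    exact hxmax y (by rw [List.mem_toFinset, Walk.support_eq_cons]
                      exact List.mem_cons_of_mem _ this)

variable {U : Type}

lemma mem_adom_of_triple {G : Set (U × U × U)} {t : U × U × U} (ht : t ∈ G) :
    t.1 ∈ adom G ∧ t.2.1 ∈ adom G ∧ t.2.2 ∈ adom G :=
  ⟨⟨t, ht, Or.inl rfl⟩, ⟨t, ht, Or.inr (Or.inl rfl)⟩, ⟨t, ht, Or.inr (Or.inr rfl)⟩⟩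

lemma hom_adom {h : U → U} {G H : Set (U × U × U)}
    (hh : ∀ t ∈ G, (h t.1, h t.2.1, h t.2.2) ∈ H) {x : U} (hx : x ∈ adom G) :
    h x ∈ adom H := by
  obtain ⟨t, ht, hx⟩ := hx
  have hm := hh t ht
  rcases hx with rfl | rfl | rfl
  · exact ⟨_, hm, Or.inl rfl⟩
  · exact ⟨_, hm, Or.inr (Or.inl rfl)⟩
  · exact ⟨_, hm, Or.inr (Or.inr rfl)⟩

lemma hom_eval (h : U → U) {G H : Set (U × U × U)}
    (hh : ∀ t ∈ G, (h t.1, h t.2.1, h t.2.2) ∈ H) :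
    ∀ e : NRE U, e.constFree → ∀ x y : U, (x, y) ∈ NRE.eval G e →
      (h x, h y) ∈ NRE.eval H e := by
  intro e
  induction e with
  | axis ax =>
    intro _ x y hxy
    cases ax with
    | self => exact ⟨congrArg h hxy.1, hom_adom hh hxy.2⟩
    | next => obtain ⟨c, hc⟩ := hxy; exact ⟨h c, hh _ hc⟩
    | edge => obtain ⟨c, hc⟩ := hxy; exact ⟨h c, hh _ hc⟩
    | node => obtain ⟨c, hc⟩ := hxy; exact ⟨h c, hh _ hc⟩
    | nextInv => obtain ⟨c, hc⟩ := hxy; exact ⟨h c, hh _ hc⟩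
    | edgeInv => obtain ⟨c, hc⟩ := hxy; exact ⟨h c, hh _ hc⟩
    | nodeInv => obtain ⟨c, hc⟩ := hxy; exact ⟨h c, hh _ hc⟩
  | axisC ax c => intro hcf; exact hcf.elim
  | nest ax e ih =>
    intro hcf x y hxy
    cases ax with
    | self =>
      obtain ⟨h1, c, h2⟩ := hxy
      exact ⟨congrArg h h1, h c, ih hcf _ _ h2⟩
    | next => obtain ⟨c, d, h1, h2⟩ := hxy; exact ⟨h c, h d, hh _ h1, ih hcf _ _ h2⟩
    | edge => obtain ⟨c, d, h1, h2⟩ := hxy; exact ⟨h c, h d, hh _ h1, ih hcf _ _ h2⟩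
    | node => obtain ⟨c, d, h1, h2⟩ := hxy; exact ⟨h c, h d, hh _ h1, ih hcf _ _ h2⟩
    | nextInv => obtain ⟨c, d, h1, h2⟩ := hxy; exact ⟨h c, h d, hh _ h1, ih hcf _ _ h2⟩
    | edgeInv => obtain ⟨c, d, h1, h2⟩ := hxy; exact ⟨h c, h d, hh _ h1, ih hcf _ _ h2⟩
    | nodeInv => obtain ⟨c, d, h1, h2⟩ := hxy; exact ⟨h c, h d, hh _ h1, ih hcf _ _ h2⟩
  | comp e1 e2 ih1 ih2 =>
    intro hcf x y hxy
    obtain ⟨c, h1, h2⟩ := hxy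
    exact ⟨h c, ih1 hcf.1 _ _ h1, ih2 hcf.2 _ _ h2⟩
  | union e1 e2 ih1 ih2 =>
    intro hcf x y hxy
    rcases hxy with hxy | hxy
    · exact Or.inl (ih1 hcf.1 _ _ hxy)
    · exact Or.inr (ih2 hcf.2 _ _ hxy)
  | star e ih =>
    intro hcf x y hxy
    rcases hxy with ⟨h1, h2⟩ | htg
    · exact Or.inl ⟨congrArg h h1, hom_adom hh h2⟩
    · right
      have htg' : Relation.TransGen (fun u v => (u, v) ∈ NRE.eval G e) x y := htg
      clear htg
      show Relation.TransGen (fun u v => (u, v) ∈ NRE.eval H e) (h x) (h y)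
      induction htg' with
      | single hstep => exact Relation.TransGen.single (ih hcf _ _ hstep)
      | tail _ hstep ihh => exact Relation.TransGen.tail ihh (ih hcf _ _ hstep)

lemma eval_subset_adom {G : Set (U × U × U)} :
    ∀ (e : NRE U) (x y : U), (x, y) ∈ NRE.eval G e → x ∈ adom G ∧ y ∈ adom G := by
  intro e
  induction e with
  | axis ax =>
    intro x y hxy
    cases ax with
    | self =>
      have h1 : x = y := hxy.1
      exact ⟨hxy.2, h1 ▸ hxy.2⟩
    | next => obtain ⟨c, hc⟩ := hxy; exact ⟨(mem_adom_of_triple hc).1, (mem_adom_of_triple hc).2.2⟩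
    | edge => obtain ⟨c, hc⟩ := hxy; exact ⟨(mem_adom_of_triple hc).1, (mem_adom_of_triple hc).2.1⟩
    | node => obtain ⟨c, hc⟩ := hxy; exact ⟨(mem_adom_of_triple hc).2.1, (mem_adom_of_triple hc).2.2⟩
    | nextInv => obtain ⟨c, hc⟩ := hxy; exact ⟨(mem_adom_of_triple hc).2.2, (mem_adom_of_triple hc).1⟩
    | edgeInv => obtain ⟨c, hc⟩ := hxy; exact ⟨(mem_adom_of_triple hc).2.1, (mem_adom_of_triple hc).1⟩
    | nodeInv => obtain ⟨c, hc⟩ := hxy; exact ⟨(mem_adom_of_triple hc).2.2, (mem_adom_of_triple hc).2.1⟩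
  | axisC ax c =>
    intro x y hxy
    cases ax with
    | self =>
      have h1 : x = y := hxy.1
      have h2 : x = c := hxy.2.1
      refine ⟨?_, ?_⟩
      · rw [h2]; exact hxy.2.2
      · rw [← h1, h2]; exact hxy.2.2
    | next => exact ⟨(mem_adom_of_triple hxy).1, (mem_adom_of_triple hxy).2.2⟩
    | edge => exact ⟨(mem_adom_of_triple hxy).1, (mem_adom_of_triple hxy).2.1⟩
    | node => exact ⟨(mem_adom_of_triple hxy).2.1, (mem_adom_of_triple hxy).2.2⟩
    | nextInv => exact ⟨(mem_adom_of_triple hxy).2.2, (mem_adom_of_triple hxy).1⟩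
    | edgeInv => exact ⟨(mem_adom_of_triple hxy).2.1, (mem_adom_of_triple hxy).1⟩
    | nodeInv => exact ⟨(mem_adom_of_triple hxy).2.2, (mem_adom_of_triple hxy).2.1⟩
  | nest ax e ih =>
    intro x y hxy
    cases ax with
    | self =>
      obtain ⟨h1, c, h2⟩ := hxy
      have h1' : x = y := h1
      exact ⟨(ih _ _ h2).1, h1' ▸ (ih _ _ h2).1⟩
    | next => obtain ⟨c, d, h1, _⟩ := hxy; exact ⟨(mem_adom_of_triple h1).1, (mem_adom_of_triple h1).2.2⟩
    | edge => obtain ⟨c, d, h1, _⟩ := hxy; exact ⟨(mem_adom_of_triple h1).1, (mem_adom_of_triple h1).2.1⟩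
    | node => obtain ⟨c, d, h1, _⟩ := hxy; exact ⟨(mem_adom_of_triple h1).2.1, (mem_adom_of_triple h1).2.2⟩
    | nextInv => obtain ⟨c, d, h1, _⟩ := hxy; exact ⟨(mem_adom_of_triple h1).2.2, (mem_adom_of_triple h1).1⟩
    | edgeInv => obtain ⟨c, d, h1, _⟩ := hxy; exact ⟨(mem_adom_of_triple h1).2.1, (mem_adom_of_triple h1).1⟩
    | nodeInv => obtain ⟨c, d, h1, _⟩ := hxy; exact ⟨(mem_adom_of_triple h1).2.2, (mem_adom_of_triple h1).2.1⟩
  | comp e1 e2 ih1 ih2 =>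
    intro x y hxy
    obtain ⟨c, h1, h2⟩ := hxy
    exact ⟨(ih1 _ _ h1).1, (ih2 _ _ h2).2⟩
  | union e1 e2 ih1 ih2 =>
    intro x y hxy
    rcases hxy with hxy | hxy
    · exact ih1 _ _ hxy
    · exact ih2 _ _ hxy
  | star e ih =>
    intro x y hxy
    rcases hxy with ⟨h1, h2⟩ | htg
    · have h1' : x = y := h1
      exact ⟨h2, h1' ▸ h2⟩
    · have htg' : Relation.TransGen (fun u v => (u, v) ∈ NRE.eval G e) x y := htg
      clear htg
      induction htg' with
      | single hstep => exact ih _ _ hstep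
      | tail _ hstep ihh => exact ⟨ihh.1, (ih _ _ hstep).2⟩

/-- Collapse lemma: if all of `G`'s triples have predicate `p` and non-`p`
subject/object, and `(c,p,c) ∈ H`, then any eval pair with both components
in `{c, p}` transfers from `G` to `H`. -/
lemma collapse_eval {p c : U} (hcp : c ≠ p) {H : Set (U × U × U)} (hcH : (c, p, c) ∈ H)
    {G : Set (U × U × U)} (hG : ∀ t ∈ G, t.2.1 = p ∧ t.1 ≠ p ∧ t.2.2 ≠ p)
    (e : NRE U) (hcf : e.constFree) {x y : U} (hxy : (x, y) ∈ NRE.eval G e)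
    (hx : x = c ∨ x = p) (hy : y = c ∨ y = p) : (x, y) ∈ NRE.eval H e := by
  classical
  set h : U → U := fun z => if z = p then p else c with hdef
  have hh : ∀ t ∈ G, (h t.1, h t.2.1, h t.2.2) ∈ H := by
    intro t ht
    obtain ⟨h1, h2, h3⟩ := hG t ht
    simp only [hdef, h1, if_pos rfl, if_neg h2, if_neg h3]
    exact hcH
  have := hom_eval h hh e hcf x y hxy
  have hx' : h x = x := by rcases hx with rfl | rfl <;> simp [hdef, hcp]
  have hy' : h y = y := by rcases hy with rfl | rfl <;> simp [hdef, hcp]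
  rwa [hx', hy'] at this

end Aux

/-! ### The core lemma: full two-element graph vs its acyclic halves -/

section Core

variable {U : Type}

/-- The full p-graph on two constants. -/
def Fg (a b p : U) : Set (U × U × U) := {(a,p,a), (a,p,b), (b,p,a), (b,p,b)}

/-- An acyclic "half" of `Fg`. The other half is `Hg b a p`. -/
def Hg (a b p : U) : Set (U × U × U) := {(a,p,a), (a,p,b), (b,p,b)}

lemma mem_Fg_iff {a b p x y z : U} :
    (x, y, z) ∈ Fg a b p ↔ ((x = a ∨ x = b) ∧ y = p ∧ (z = a ∨ z = b)) := by
  simp only [Fg, Set.mem_insert_iff, Set.mem_singleton_iff, Prod.mk.injEq]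
  tauto

lemma Fg_pgraph {a b p : U} (hap : a ≠ p) (hbp : b ≠ p) :
    ∀ t ∈ Fg a b p, t.2.1 = p ∧ t.1 ≠ p ∧ t.2.2 ≠ p := by
  intro t ht
  rcases ht with rfl | rfl | rfl | rfl <;> exact ⟨rfl, by assumption, by assumption⟩

lemma mem_adom_Fg {a b p x : U} (hx : x ∈ adom (Fg a b p)) : x = a ∨ x = b ∨ x = p := by
  obtain ⟨t, ht, h⟩ := hx
  rcases ht with rfl | rfl | rfl | rfl <;> rcases h with rfl | rfl | rfl <;> tauto

lemma aPa_mem_Hg {a b p : U} : (a, p, a) ∈ Hg a b p := Or.inl rfl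
lemma aPb_mem_Hg {a b p : U} : (a, p, b) ∈ Hg a b p := Or.inr (Or.inl rfl)
lemma bPb_mem_Hg {a b p : U} : (b, p, b) ∈ Hg a b p := Or.inr (Or.inr rfl)

/-- Non-off-diagonal pairs transfer from `Fg` to both halves. -/
lemma Pfree {a b p : U} (hap : a ≠ p) (hbp : b ≠ p)
    (e : NRE U) (hcf : e.constFree) {x y : U} (hxy : (x, y) ∈ NRE.eval (Fg a b p) e)
    (hno1 : ¬(x = a ∧ y = b)) (hno2 : ¬(x = b ∧ y = a)) :
    (x, y) ∈ NRE.eval (Hg a b p) e ∧ (x, y) ∈ NRE.eval (Hg b a p) e := by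
  have hx := mem_adom_Fg (eval_subset_adom e x y hxy).1
  have hy := mem_adom_Fg (eval_subset_adom e x y hxy).2
  have hcase : (((x = a ∨ x = p) ∧ (y = a ∨ y = p)) ∨ ((x = b ∨ x = p) ∧ (y = b ∨ y = p))) := by
    rcases hx with rfl | rfl | rfl <;> rcases hy with h | h | h <;> tauto
  have hFg := Fg_pgraph (a := a) (b := b) hap hbp
  rcases hcase with ⟨h1, h2⟩ | ⟨h1, h2⟩
  · exact ⟨collapse_eval hap aPa_mem_Hg hFg e hcf hxy h1 h2,
      collapse_eval hap (bPb_mem_Hg (a := b) (b := a)) hFg e hcf hxy h1 h2⟩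
  · exact ⟨collapse_eval hbp bPb_mem_Hg hFg e hcf hxy h1 h2,
      collapse_eval hbp (aPa_mem_Hg (a := b) (b := a)) hFg e hcf hxy h1 h2⟩

/-- The core lemma. -/
lemma Qlem {a b p : U} (hab : a ≠ b) (hap : a ≠ p) (hbp : b ≠ p) :
    ∀ e : NRE U, e.constFree → (a, b) ∈ NRE.eval (Fg a b p) e →
      (a, b) ∈ NRE.eval (Hg a b p) e ∨ (a, b) ∈ NRE.eval (Hg b a p) e := by
  intro e
  induction e with
  | axis ax =>
    intro _ hxy
    cases ax with
    | self => exact absurd hxy.1 hab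
    | next => exact Or.inl ⟨p, aPb_mem_Hg⟩
    | edge =>
      obtain ⟨c, hc⟩ := hxy
      exact absurd (mem_Fg_iff.mp hc).2.1 hbp
    | node =>
      obtain ⟨c, hc⟩ := hxy
      exact absurd (mem_Fg_iff.mp hc).2.1 hap
    | nextInv => exact Or.inr ⟨p, aPb_mem_Hg (a := b) (b := a)⟩
    | edgeInv =>
      obtain ⟨c, hc⟩ := hxy
      exact absurd (mem_Fg_iff.mp hc).2.1 hap
    | nodeInv =>
      obtain ⟨c, hc⟩ := hxy
      exact absurd (mem_Fg_iff.mp hc).2.1 hbp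
  | axisC ax c => intro hcf; exact hcf.elim
  | nest ax e ih =>
    intro hcf hxy
    cases ax with
    | self => exact absurd hxy.1 hab
    | next =>
      obtain ⟨c, d, h1, h2⟩ := hxy
      have hcp : c = p := (mem_Fg_iff.mp h1).2.1
      rw [hcp] at h2
      have hP := Pfree hap hbp e hcf h2
        (fun h => hap h.1.symm) (fun h => hbp h.1.symm)
      exact Or.inl ⟨p, d, aPb_mem_Hg, hP.1⟩
    | edge =>
      obtain ⟨c, d, h1, h2⟩ := hxy
      exact absurd (mem_Fg_iff.mp h1).2.1 hbp
    | node =>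
      obtain ⟨c, d, h1, h2⟩ := hxy
      exact absurd (mem_Fg_iff.mp h1).2.1 hap
    | nextInv =>
      obtain ⟨c, d, h1, h2⟩ := hxy
      have hcp : c = p := (mem_Fg_iff.mp h1).2.1
      rw [hcp] at h2
      have hP := Pfree hap hbp e hcf h2
        (fun h => hap h.1.symm) (fun h => hbp h.1.symm)
      exact Or.inr ⟨p, d, aPb_mem_Hg (a := b) (b := a), hP.2⟩
    | edgeInv =>
      obtain ⟨c, d, h1, h2⟩ := hxy
      exact absurd (mem_Fg_iff.mp h1).2.1 hap
    | nodeInv =>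
      obtain ⟨c, d, h1, h2⟩ := hxy
      exact absurd (mem_Fg_iff.mp h1).2.1 hbp
  | comp e1 e2 ih1 ih2 =>
    intro hcf hxy
    obtain ⟨c, h1, h2⟩ := hxy
    rcases mem_adom_Fg (eval_subset_adom e1 a c h1).2 with hc | hc | hc <;> rw [hc] at h1 h2
    · have hP := Pfree hap hbp e1 hcf.1 h1 (fun h => hab h.2) (fun h => hab h.1)
      exact (ih2 hcf.2 h2).imp (fun h => ⟨a, hP.1, h⟩) (fun h => ⟨a, hP.2, h⟩)
    · have hP := Pfree hap hbp e2 hcf.2 h2 (fun h => hab h.1.symm) (fun h => hab h.2.symm)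
      exact (ih1 hcf.1 h1).imp (fun h => ⟨b, h, hP.1⟩) (fun h => ⟨b, h, hP.2⟩)
    · have hP1 := Pfree hap hbp e1 hcf.1 h1 (fun h => hbp h.2.symm) (fun h => hab h.1)
      have hP2 := Pfree hap hbp e2 hcf.2 h2 (fun h => hap h.1.symm) (fun h => hbp h.1.symm)
      exact Or.inl ⟨p, hP1.1, hP2.1⟩
  | union e1 e2 ih1 ih2 =>
    intro hcf hxy
    rcases hxy with hxy | hxy
    · exact (ih1 hcf.1 hxy).imp Or.inl Or.inl
    · exact (ih2 hcf.2 hxy).imp Or.inr Or.inr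
  | star e ih =>
    intro hcf hxy
    rcases hxy with ⟨h1, _⟩ | htg
    · exact absurd h1 hab
    have htg' : Relation.TransGen (fun u v => (u, v) ∈ NRE.eval (Fg a b p) e) a b := htg
    clear htg
    have hone : ∀ x' : U, (x', b) ∈ NRE.eval (Fg a b p) e →
        Relation.TransGen (fun u v => (u, v) ∈ NRE.eval (Hg a b p) e) x' b ∨
        Relation.TransGen (fun u v => (u, v) ∈ NRE.eval (Hg b a p) e) x' b := by
      intro x' hstep
      by_cases hxa : x' = a
      · subst hxa
        exact (ih hcf hstep).imp Relation.TransGen.single Relation.TransGen.single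
      · have hP := Pfree hap hbp e hcf hstep (fun h => hxa h.1) (fun h => hab h.2.symm)
        exact Or.inl (Relation.TransGen.single hP.1)
    have key : ∀ x : U, Relation.TransGen (fun u v => (u, v) ∈ NRE.eval (Fg a b p) e) x b →
        x ≠ b →
        Relation.TransGen (fun u v => (u, v) ∈ NRE.eval (Hg a b p) e) x b ∨
        Relation.TransGen (fun u v => (u, v) ∈ NRE.eval (Hg b a p) e) x b := by
      intro x hTG
      induction hTG using Relation.TransGen.head_induction_on with
      | @single x' hstep =>
        intro _
        exact hone x' hstep
      | @head x' c' hstep hTG2 ihP =>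
        intro hxb
        by_cases hcb : c' = b
        · rw [hcb] at hstep
          exact hone x' hstep
        · have hP := Pfree hap hbp e hcf hstep (fun h => hcb h.2) (fun h => hxb h.1)
          exact (ihP hcb).imp (fun h => Relation.TransGen.head hP.1 h)
            (fun h => Relation.TransGen.head hP.2 h)
    exact (key a htg' hab).imp Or.inr Or.inr

end Core

section Final

variable {U : Type}

lemma acyclic_single {p s : U} : (indGraph p {(s, p, s)}).IsAcyclic := by
  classical
  apply acyclic_of_parent _ (Sum.elim Sum.inl (fun q => Sum.inl q.1))
    (Sum.elim (fun _ => 0) (fun _ => 1))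
  rintro v w ⟨x, ⟨q1, q2⟩, (⟨rfl, rfl⟩ | ⟨rfl, rfl⟩), hq, hx⟩ <;>
  · simp only [Set.mem_singleton_iff, Prod.mk.injEq] at hq
    obtain ⟨rfl, -, rfl⟩ := hq
    rcases hx with rfl | rfl <;> simp

lemma acyclic_Hg {a b p : U} (hab : a ≠ b) : (indGraph p (Hg a b p)).IsAcyclic := by
  classical
  apply acyclic_of_parent _
    (Sum.elim (fun x => if x = b then Sum.inr (a, b) else Sum.inl x)
              (fun q => if q = (b, b) then Sum.inl b else Sum.inl a))
    (Sum.elim (fun x => if x = b then 2 else 0)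
              (fun q => if q = (b, b) then 3 else 1))
  rintro v w ⟨x, ⟨q1, q2⟩, (⟨rfl, rfl⟩ | ⟨rfl, rfl⟩), hq, hx⟩ <;>
  · rcases hq with h | h | h <;> simp only [Set.mem_singleton_iff, Prod.mk.injEq] at h <;>
      obtain ⟨rfl, -, rfl⟩ := h <;> rcases hx with rfl | rfl <;>
      simp [hab, Prod.ext_iff]

lemma pgraph_Hg {a b p : U} (hap : a ≠ p) (hbp : b ≠ p) : IsPGraph p (Hg a b p) := by
  refine ⟨?_, ?_⟩ <;> intro t ht <;> rcases ht with rfl | rfl | rfl <;> simp [hap, hbp]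

lemma finite_Hg {a b p : U} : (Hg a b p).Finite := by
  unfold Hg
  exact ((Set.finite_singleton _).insert _).insert _

end Final

/-- For every constant-free nre e, if (a,b) ∈ ⟦e⟧_G for some p-RDF
graph G with a, b constants of G, then there is a strongly acyclic p-RDF graph H
with (a,b) ∈ ⟦e⟧_H. -/
theorem constFree_nre_strongly_acyclic_witness {U : Type} (e : NRE U)
    (hcf : e.constFree) (p : U) (G : Set (U × U × U)) (hfin : G.Finite)
    (hpG : IsPGraph p G) (a b : U) (ha : a ∈ adom G) (hb : b ∈ adom G)
    (hab : (a, b) ∈ NRE.eval G e) :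
    ∃ H : Set (U × U × U), H.Finite ∧ IsPGraph p H ∧ StronglyAcyclic p H ∧
      (a, b) ∈ NRE.eval H e := by
  classical
  have hG' : ∀ t ∈ G, t.2.1 = p ∧ t.1 ≠ p ∧ t.2.2 ≠ p :=
    fun t ht => ⟨hpG.1 t ht, hpG.2 t ht⟩
  by_cases hD : a ≠ b ∧ a ≠ p ∧ b ≠ p
  · obtain ⟨hab', hap, hbp⟩ := hD
    set h : U → U := fun x => if x = p then p else if x = b then b else a with hdef
    have hh : ∀ t ∈ G, (h t.1, h t.2.1, h t.2.2) ∈ Fg a b p := by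
      intro t ht
      obtain ⟨h1, h2, h3⟩ := hG' t ht
      have e1 : h t.2.1 = p := by simp [hdef, h1]
      have e2 : h t.1 = a ∨ h t.1 = b := by
        by_cases hb' : t.1 = b <;> simp [hdef, h2, hb', hbp]
      have e3 : h t.2.2 = a ∨ h t.2.2 = b := by
        by_cases hb' : t.2.2 = b <;> simp [hdef, h3, hb', hbp]
      exact mem_Fg_iff.mpr ⟨e2, e1, e3⟩
    have hFab : (a, b) ∈ NRE.eval (Fg a b p) e := by
      have hmain := hom_eval h hh e hcf a b hab
      have hea : h a = a := by simp [hdef, hap, hab']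
      have heb : h b = b := by simp [hdef, hbp]
      rwa [hea, heb] at hmain
    rcases Qlem hab' hap hbp e hcf hFab with hH | hH
    · exact ⟨Hg a b p, finite_Hg, pgraph_Hg hap hbp, acyclic_Hg hab', hH⟩
    · exact ⟨Hg b a p, finite_Hg, pgraph_Hg hbp hap, acyclic_Hg hab'.symm, hH⟩
  · have hdeg : ∃ c : U, c ≠ p ∧ (a = c ∨ a = p) ∧ (b = c ∨ b = p) := by
      by_cases hap : a = p
      · by_cases hbp : b = p
        · obtain ⟨t, ht, -⟩ := ha
          exact ⟨t.1, (hG' t ht).2.1, Or.inr hap, Or.inr hbp⟩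
        · exact ⟨b, hbp, Or.inr hap, Or.inl rfl⟩
      · by_cases hbp : b = p
        · exact ⟨a, hap, Or.inl rfl, Or.inr hbp⟩
        · have hab'' : a = b := by tauto
          exact ⟨a, hap, Or.inl rfl, Or.inl hab''.symm⟩
    obtain ⟨c, hcp, hac, hbc⟩ := hdeg
    refine ⟨{(c, p, c)}, Set.finite_singleton _, ⟨?_, ?_⟩, acyclic_single, ?_⟩
    · intro t ht
      rw [Set.mem_singleton_iff] at ht
      subst ht; rfl
    · intro t ht
      rw [Set.mem_singleton_iff] at ht
      subst ht; exact ⟨hcp, hcp⟩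
    · exact collapse_eval (H := {(c, p, c)}) hcp rfl hG' e hcf hab hac hbc
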